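/- Let k ≥ 3 be an integer and set α = k - 1 + √(k(k-2)) and β = k - 1 - √(k(k-2)). For every integer i ≥ 0, there exist positive integers n and m such that P(n;k) = C(m;k), where (m : ℝ) = (1/4)·(2 + ((k + √(k(k-2)))/√(k(k-2)))·α^i + ((-k + √(k(k-2)))/√(k(k-2)))·β^i) and (n : ℝ) = (k - 4 + (α^(i+1) + α^i + β^(i+1) + β^i)/2) / (2(k-2)); moreover the common value satisfies (P(n;k) : ℝ) = (k/(16(k-2))) · ((-2k² + 18k - 32)/k + α^(2i+1) + β^(2i+1)). -/

import Mathlib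

/-- The `n`-th `k`-gonal number: `P(n;k) = ((k-2)n² + (4-k)n)/2` (the numerator is always even). -/
def polygonal (k n : ℤ) : ℤ := ((k - 2) * n ^ 2 + (4 - k) * n) / 2

/-- The `m`-th centered `k`-gonal number: `C(m;k) = (km² - km + 2)/2` (the numerator is always even). -/
def centered (k m : ℤ) : ℤ := (k * m ^ 2 - k * m + 2) / 2

/-- `s = √(k(k-2))`. -/
noncomputable def pellSqrt (k : ℤ) : ℝ := Real.sqrt ((k : ℝ) * ((k : ℝ) - 2))

/-- `α = k - 1 + √(k(k-2))`. -/
noncomputable def pellAlpha (k : ℤ) : ℝ := (k : ℝ) - 1 + pellSqrt k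

/-- `β = k - 1 - √(k(k-2))`. -/
noncomputable def pellBeta (k : ℤ) : ℝ := (k : ℝ) - 1 - pellSqrt k

private def mSeq (k : ℤ) : ℕ → ℤ
  | 0 => 1
  | 1 => k
  | (i+2) => 2*(k-1)*mSeq k (i+1) - mSeq k i + (2-k)

private def nSeq (k : ℤ) : ℕ → ℤ
  | 0 => 1
  | 1 => k+1
  | (i+2) => 2*(k-1)*nSeq k (i+1) - nSeq k i + (4-k)

private lemma mSeq_pos (k : ℤ) (hk : 3 ≤ k) (i : ℕ) :
    1 ≤ mSeq k i ∧ mSeq k i ≤ mSeq k (i+1) := by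
  induction i with
  | zero => simp [mSeq]; omega
  | succ i ih =>
    obtain ⟨h1, h2⟩ := ih
    refine ⟨by omega, ?_⟩
    show mSeq k (i+1) ≤ 2*(k-1)*mSeq k (i+1) - mSeq k i + (2-k)
    nlinarith [mul_le_mul_of_nonneg_left h2 (by omega : (0:ℤ) ≤ 2*k-4)]

private lemma nSeq_pos (k : ℤ) (hk : 3 ≤ k) (i : ℕ) :
    1 ≤ nSeq k i ∧ nSeq k i ≤ nSeq k (i+1) := by
  induction i with
  | zero => simp [nSeq]; omega
  | succ i ih =>
    obtain ⟨h1, h2⟩ := ih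
    refine ⟨by omega, ?_⟩
    show nSeq k (i+1) ≤ 2*(k-1)*nSeq k (i+1) - nSeq k i + (4-k)
    nlinarith [mul_le_mul_of_nonneg_left h2 (by omega : (0:ℤ) ≤ 2*k-4)]

private lemma mSeq_closed (k : ℤ) (hk : 3 ≤ k) (i : ℕ) :
    4 * pellSqrt k * (mSeq k i : ℝ) =
      2 * pellSqrt k + ((k:ℝ) + pellSqrt k) * pellAlpha k ^ i
        + (pellSqrt k - (k:ℝ)) * pellBeta k ^ i := by
  have hs : pellSqrt k ^ 2 = (k:ℝ) * ((k:ℝ) - 2) := by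
    rw [pellSqrt, Real.sq_sqrt]
    nlinarith [(by exact_mod_cast hk : (3:ℝ) ≤ (k:ℝ))]
  have ha : pellAlpha k = (k:ℝ) - 1 + pellSqrt k := rfl
  have hb : pellBeta k = (k:ℝ) - 1 - pellSqrt k := rfl
  induction i using Nat.twoStepInduction with
  | zero => simp [mSeq]; ring
  | one => simp [mSeq, ha, hb]; ring
  | more i ih0 ih1 =>
    have hA : pellAlpha k ^ 2 = 2*((k:ℝ)-1)*pellAlpha k - 1 := by
      rw [ha]; linear_combination hs
    have hB : pellBeta k ^ 2 = 2*((k:ℝ)-1)*pellBeta k - 1 := by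
      rw [hb]; linear_combination hs
    show 4 * pellSqrt k * ((2*(k-1)*mSeq k (i+1) - mSeq k i + (2-k) : ℤ) : ℝ) = _
    push_cast
    linear_combination 2*((k:ℝ)-1)*ih1 - ih0 - ((k:ℝ)+pellSqrt k)*pellAlpha k ^ i * hA
      - (pellSqrt k - (k:ℝ))*pellBeta k ^ i * hB

private lemma nSeq_closed (k : ℤ) (hk : 3 ≤ k) (i : ℕ) :
    4 * ((k:ℝ) - 2) * (nSeq k i : ℝ) =
      2 * ((k:ℝ) - 4) + ((k:ℝ) + pellSqrt k) * pellAlpha k ^ i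
        + ((k:ℝ) - pellSqrt k) * pellBeta k ^ i := by
  have hs : pellSqrt k ^ 2 = (k:ℝ) * ((k:ℝ) - 2) := by
    rw [pellSqrt, Real.sq_sqrt]
    nlinarith [(by exact_mod_cast hk : (3:ℝ) ≤ (k:ℝ))]
  have ha : pellAlpha k = (k:ℝ) - 1 + pellSqrt k := rfl
  have hb : pellBeta k = (k:ℝ) - 1 - pellSqrt k := rfl
  induction i using Nat.twoStepInduction with
  | zero => simp [nSeq]; ring
  | one => simp [nSeq, ha, hb]; linear_combination -2*hs
  | more i ih0 ih1 =>
    have hA : pellAlpha k ^ 2 = 2*((k:ℝ)-1)*pellAlpha k - 1 := by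
      rw [ha]; linear_combination hs
    have hB : pellBeta k ^ 2 = 2*((k:ℝ)-1)*pellBeta k - 1 := by
      rw [hb]; linear_combination hs
    show 4 * ((k:ℝ)-2) * ((2*(k-1)*nSeq k (i+1) - nSeq k i + (4-k) : ℤ) : ℝ) = _
    push_cast
    linear_combination 2*((k:ℝ)-1)*ih1 - ih0 - ((k:ℝ)+pellSqrt k)*pellAlpha k ^ i * hA
      - ((k:ℝ) - pellSqrt k)*pellBeta k ^ i * hB

theorem polygonal_eq_centered_solutions (k : ℤ) (hk : 3 ≤ k) (i : ℕ) :
    ∃ n m : ℤ, 1 ≤ n ∧ 1 ≤ m ∧ polygonal k n = centered k m ∧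
      (m : ℝ) = (1 / 4) * (2 + (((k : ℝ) + pellSqrt k) / pellSqrt k) * pellAlpha k ^ i
          + ((-(k : ℝ) + pellSqrt k) / pellSqrt k) * pellBeta k ^ i) ∧
      (n : ℝ) = ((k : ℝ) - 4 +
          (pellAlpha k ^ (i + 1) + pellAlpha k ^ i + pellBeta k ^ (i + 1) + pellBeta k ^ i) / 2) /
          (2 * ((k : ℝ) - 2)) ∧
      (polygonal k n : ℝ) = ((k : ℝ) / (16 * ((k : ℝ) - 2))) *
          ((-2 * (k : ℝ) ^ 2 + 18 * (k : ℝ) - 32) / (k : ℝ) +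
            pellAlpha k ^ (2 * i + 1) + pellBeta k ^ (2 * i + 1)) := by
  set s := pellSqrt k with hsdef
  set a := pellAlpha k with hadef
  set b := pellBeta k with hbdef
  have hkR : (3:ℝ) ≤ (k:ℝ) := by exact_mod_cast hk
  have hs : s ^ 2 = (k:ℝ) * ((k:ℝ) - 2) := by
    rw [hsdef, pellSqrt, Real.sq_sqrt]; nlinarith
  have hspos : 0 < s := by
    rw [hsdef, pellSqrt]; apply Real.sqrt_pos.2; nlinarith
  have hs0 : s ≠ 0 := ne_of_gt hspos
  have hk2 : (k:ℝ) - 2 ≠ 0 := by nlinarith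
  have hk0 : (k:ℝ) ≠ 0 := by nlinarith
  have ha : a = (k:ℝ) - 1 + s := rfl
  have hb : b = (k:ℝ) - 1 - s := rfl
  have hAB : a ^ i * b ^ i = 1 := by
    rw [← mul_pow]
    have : a * b = 1 := by rw [ha, hb]; linear_combination -hs
    rw [this, one_pow]
  refine ⟨nSeq k i, mSeq k i, (nSeq_pos k hk i).1, (mSeq_pos k hk i).1, ?_, ?_, ?_, ?_⟩
  · -- polygonal = centered
    have hm4 := mSeq_closed k hk i
    have hn4 := nSeq_closed k hk i
    rw [← hsdef, ← hadef, ← hbdef] at hm4 hn4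
    set n := nSeq k i
    set m := mSeq k i
    -- numerator equality over ℝ
    have key : ((k - 2) * n ^ 2 + (4 - k) * n : ℤ) = (k * m ^ 2 - k * m + 2 : ℤ) := by
      have hR : (16 * ((k:ℝ)-2) * s^2) * (((k:ℝ)-2) * (n:ℝ)^2 + (4-(k:ℝ)) * (n:ℝ)) =
          (16 * ((k:ℝ)-2) * s^2) * ((k:ℝ) * (m:ℝ)^2 - (k:ℝ) * (m:ℝ) + 2) := by
        linear_combination
          (s^2*(4*((k:ℝ)-2)*(n:ℝ) - 2*((k:ℝ)-4) + ((k:ℝ)+s)*a^i + ((k:ℝ)-s)*b^i)) * hn4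
          - ((k:ℝ)*((k:ℝ)-2)*(4*s*(m:ℝ) - 2*s + ((k:ℝ)+s)*a^i + (s-(k:ℝ))*b^i)) * hm4
          + (4*(k:ℝ)*((k:ℝ)-2)*((k:ℝ)^2-s^2)) * hAB
          + ((((k:ℝ)+s)*a^i + ((k:ℝ)-s)*b^i)^2 - 4*((k:ℝ)-4)^2 - 32*((k:ℝ)-2)) * hs
      have hne : (16 * ((k:ℝ)-2) * s^2) ≠ 0 := by positivity
      have := mul_left_cancel₀ hne hR
      exact_mod_cast this
    have hpoly : 2 * polygonal k n = (k - 2) * n ^ 2 + (4 - k) * n := by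
      rw [polygonal]
      refine Int.mul_ediv_cancel' ?_
      obtain ⟨c, hc⟩ := Int.even_mul_succ_self (n - 1)
      exact ⟨(k-2)*c + n, by linear_combination (k-2)*hc⟩
    have hcent : 2 * centered k m = k * m ^ 2 - k * m + 2 := by
      rw [centered]
      refine Int.mul_ediv_cancel' ?_
      obtain ⟨c, hc⟩ := Int.even_mul_succ_self (m - 1)
      exact ⟨k*c + 1, by linear_combination k*hc⟩
    omega
  · -- m formula
    have hm4 := mSeq_closed k hk i
    rw [← hsdef, ← hadef, ← hbdef] at hm4
    field_simp
    linear_combination hm4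
  · -- n formula
    have hn4 := nSeq_closed k hk i
    rw [← hsdef, ← hadef, ← hbdef] at hn4
    have hap : a ^ (i+1) = a * a ^ i := by ring
    have hbp : b ^ (i+1) = b * b ^ i := by ring
    have hn4' : 4*((k:ℝ)-2)*((nSeq k i : ℤ):ℝ) = 2*((k:ℝ)-4) + (a+1)*a^i + (b+1)*b^i := by
      linear_combination hn4 - a^i*ha - b^i*hb
    rw [hap, hbp]
    field_simp
    linear_combination hn4'
  · -- value formula
    have hn4 := nSeq_closed k hk i
    rw [← hsdef, ← hadef, ← hbdef] at hn4
    set n := nSeq k i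
    have hpoly : 2 * polygonal k n = (k - 2) * n ^ 2 + (4 - k) * n := by
      rw [polygonal]
      refine Int.mul_ediv_cancel' ?_
      obtain ⟨c, hc⟩ := Int.even_mul_succ_self (n - 1)
      exact ⟨(k-2)*c + n, by linear_combination (k-2)*hc⟩
    have hpolyR : 2 * (polygonal k n : ℝ) = ((k:ℝ) - 2) * (n:ℝ)^2 + (4 - (k:ℝ)) * (n:ℝ) := by
      exact_mod_cast congrArg (Int.cast : ℤ → ℝ) hpoly
    have hL2 : 16 * ((k:ℝ)-2) * (((k:ℝ)-2) * (n:ℝ)^2 + (4-(k:ℝ)) * (n:ℝ)) =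
        2*(-2*(k:ℝ)^2 + 18*(k:ℝ) - 32) + 2*(k:ℝ)*(a * (a^i)^2 + b * (b^i)^2) := by
      linear_combination
        (4*((k:ℝ)-2)*(n:ℝ) - 2*((k:ℝ)-4) + ((k:ℝ)+s)*a^i + ((k:ℝ)-s)*b^i) * hn4
        + (4*(k:ℝ)) * hAB + (a^i - b^i)^2 * hs - 2*(k:ℝ)*(a^i)^2 * ha - 2*(k:ℝ)*(b^i)^2 * hb
    have hpw : a ^ (2*i+1) = a * (a^i)^2 := by rw [pow_succ, pow_mul]; ring
    have hpw' : b ^ (2*i+1) = b * (b^i)^2 := by rw [pow_succ, pow_mul]; ring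
    rw [hpw, hpw']
    field_simp
    linear_combination (8*((k:ℝ)-2)) * hpolyR + (1/2:ℝ) * hL2
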